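/- Negative weights can reverse signs: there exist random variables (D(0), D(1)) and a family of continuously differentiable functions Y_i with Y_i'(v) > 0 everywhere, such that 𝔼[D(1) - D(0)] > 0 but 𝔼[Y(D(1)) - Y(D(0))] / 𝔼[D(1) - D(0)] < 0. -/

import Mathlib

open MeasureTheory

lemma integral_half_sum (f : Bool → ℝ) :
    ∫ ω, f ω ∂((2 : ENNReal)⁻¹ • (Measure.dirac true + Measure.dirac false))
      = (f true + f false) / 2 := by
  rw [integral_smul_measure, integral_add_measure (by simp [Integrable.of_finite])
    (by simp [Integrable.of_finite]), integral_dirac, integral_dirac]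
  simp [ENNReal.toReal_inv]
  ring

instance : IsFiniteMeasure
    ((2 : ENNReal)⁻¹ • (Measure.dirac true + Measure.dirac false) : Measure Bool) := by
  constructor
  simp [Measure.smul_apply]

/-- Negative weights can reverse signs: there is a population where each individual outcome
function has strictly positive derivative everywhere, the average first stage
`𝔼[D(1) - D(0)]` is positive, yet the Wald estimand is negative. -/
theorem stmt15 : ∃ (Ω : Type) (_ : MeasurableSpace Ω) (P : Measure Ω)
    (_ : IsProbabilityMeasure P) (D0 D1 : Ω → ℝ) (Yf : Ω → ℝ → ℝ),
    (∀ ω, ContDiff ℝ 1 (Yf ω)) ∧ (∀ ω v, 0 < deriv (Yf ω) v) ∧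
    Integrable (fun ω => D1 ω - D0 ω) P ∧
    Integrable (fun ω => Yf ω (D1 ω) - Yf ω (D0 ω)) P ∧
    0 < ∫ ω, (D1 ω - D0 ω) ∂P ∧
    (∫ ω, (Yf ω (D1 ω) - Yf ω (D0 ω)) ∂P) / (∫ ω, (D1 ω - D0 ω) ∂P) < 0 := by
  refine ⟨Bool, inferInstance,
    (2 : ENNReal)⁻¹ • (Measure.dirac true + Measure.dirac false), ?_,
    fun _ => 0, fun b => if b then 2 else -1,
    fun b x => if b then x else 10 * x, ?_, ?_, ?_, ?_, ?_, ?_⟩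
  case refine_1 =>
    constructor
    simp [Measure.smul_apply]
    exact ENNReal.inv_two_add_inv_two
  · intro ω; cases ω
    · simpa using (contDiff_const.mul contDiff_id : ContDiff ℝ 1 fun x : ℝ => (10:ℝ) * id x)
    · exact contDiff_id
  · intro ω v; cases ω <;> simp
  · exact Integrable.of_finite
  · exact Integrable.of_finite
  · rw [integral_half_sum]; norm_num
  · rw [integral_half_sum, integral_half_sum]; norm_num
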